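/- Let n ≥ 1 and let γ = (x, y) : [0,1] → ℝⁿ × ℝⁿ be a continuously differentiable path with γ(0) = γ(1). Then the symplectic action of γ is bounded by its length squared: |∫₀¹ ⟨x(t), y′(t)⟩ dt| ≤ (1/2)·(∫₀¹ ‖γ′(t)‖ dt)². -/

import Mathlib

open intervalIntegral Set MeasureTheory

/-- FTC helper on `[0,1]`. -/
lemma ftc_aux {E : Type*} [NormedAddCommGroup E] [NormedSpace ℝ E] [CompleteSpace E]
    (f f' : ℝ → E)
    (hd : ∀ t ∈ Set.Icc (0:ℝ) 1, HasDerivWithinAt f (f' t) (Set.Icc 0 1) t)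
    (hc : ContinuousOn f' (Set.Icc 0 1)) {b : ℝ} (hb : b ∈ Set.Icc (0:ℝ) 1) :
    ∫ t in (0:ℝ)..b, f' t = f b - f 0 := by
  apply intervalIntegral.integral_eq_sub_of_hasDeriv_right_of_le hb.1
  · exact (show ContinuousOn f (Set.Icc 0 1) from fun t ht =>
      (hd t ht).continuousWithinAt).mono (Set.Icc_subset_Icc le_rfl hb.2)
  · intro t ht
    have ht' : t ∈ Set.Ioo (0:ℝ) 1 := ⟨ht.1, lt_of_lt_of_le ht.2 hb.2⟩
    exact (((hd t (Set.Ioo_subset_Icc_self ht')).hasDerivAt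
      (Icc_mem_nhds ht'.1 ht'.2)).hasDerivWithinAt)
  · apply ContinuousOn.intervalIntegrable
    rw [Set.uIcc_of_le hb.1]
    exact hc.mono (Set.Icc_subset_Icc le_rfl hb.2)

set_option maxHeartbeats 4000000 in
set_option synthInstance.maxHeartbeats 400000 in
/-- Isoperimetric inequality for closed loops in ℝⁿ × ℝⁿ (Euclidean norm):
the symplectic action `∫ ⟨x, y'⟩` of a C¹ loop `γ = (x, y)` is bounded by half the
square of its length. The Euclidean norm on ℝⁿ × ℝⁿ is realized via the `L²` product
`WithLp 2 (EuclideanSpace ℝ (Fin n) × EuclideanSpace ℝ (Fin n))`. -/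
theorem loop_isoperimetric_inequality (n : ℕ) (hn : 1 ≤ n)
    (γ γ' : ℝ → WithLp 2 (EuclideanSpace ℝ (Fin n) × EuclideanSpace ℝ (Fin n)))
    (hderiv : ∀ t ∈ Set.Icc (0:ℝ) 1, HasDerivWithinAt γ (γ' t) (Set.Icc 0 1) t)
    (hcont : ContinuousOn γ' (Set.Icc 0 1))
    (hclosed : γ 0 = γ 1) :
    |∫ t in (0:ℝ)..1,
        (inner ℝ ((WithLp.equiv 2 _ (γ t)).1) ((WithLp.equiv 2 _ (γ' t)).2) : ℝ)| ≤
      (1 / 2) * (∫ t in (0:ℝ)..1, ‖γ' t‖) ^ 2 := by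
  let E := EuclideanSpace ℝ (Fin n)
  set F : WithLp 2 (E × E) →L[ℝ] E :=
    (ContinuousLinearMap.fst ℝ E E).comp
      (WithLp.prodContinuousLinearEquiv 2 ℝ E E).toContinuousLinearMap with hF
  set S : WithLp 2 (E × E) →L[ℝ] E :=
    (ContinuousLinearMap.snd ℝ E E).comp
      (WithLp.prodContinuousLinearEquiv 2 ℝ E E).toContinuousLinearMap with hS
  set x : ℝ → E := fun t => F (γ t) with hx
  set x' : ℝ → E := fun t => F (γ' t) with hx'
  set y : ℝ → E := fun t => S (γ t) with hy
  set y' : ℝ → E := fun t => S (γ' t) with hy'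
  have hxd : ∀ t ∈ Set.Icc (0:ℝ) 1, HasDerivWithinAt x (x' t) (Set.Icc 0 1) t :=
    fun t ht => (F.hasFDerivAt.comp_hasDerivWithinAt t (hderiv t ht))
  have hyd : ∀ t ∈ Set.Icc (0:ℝ) 1, HasDerivWithinAt y (y' t) (Set.Icc 0 1) t :=
    fun t ht => (S.hasFDerivAt.comp_hasDerivWithinAt t (hderiv t ht))
  have hx'c : ContinuousOn x' (Set.Icc 0 1) := F.continuous.comp_continuousOn hcont
  have hy'c : ContinuousOn y' (Set.Icc 0 1) := S.continuous.comp_continuousOn hcont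
  have hxc : ContinuousOn x (Set.Icc 0 1) := fun t ht => (hxd t ht).continuousWithinAt
  -- the integrand in the statement equals ⟪x t, y' t⟫
  have hint : ∀ t, (inner ℝ ((WithLp.equiv 2 _ (γ t)).1) ((WithLp.equiv 2 _ (γ' t)).2) : ℝ)
      = inner ℝ (x t) (y' t) := fun t => rfl
  -- norms of components
  have hnorm : ∀ v : WithLp 2 (E × E), ‖F v‖ ^ 2 + ‖S v‖ ^ 2 = ‖v‖ ^ 2 := fun v =>
    (WithLp.prod_norm_sq_eq_of_L2 v).symm
  have hFle : ∀ v : WithLp 2 (E × E), ‖F v‖ + ‖S v‖ ≤ Real.sqrt 2 * ‖v‖ := by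
    intro v
    have h2 := hnorm v
    have hFv : (0:ℝ) ≤ ‖F v‖ := norm_nonneg _
    have hSv : (0:ℝ) ≤ ‖S v‖ := norm_nonneg _
    calc ‖F v‖ + ‖S v‖ = Real.sqrt ((‖F v‖ + ‖S v‖) ^ 2) :=
          (Real.sqrt_sq (by positivity)).symm
      _ ≤ Real.sqrt (2 * ‖v‖ ^ 2) := Real.sqrt_le_sqrt (by nlinarith [sq_nonneg (‖F v‖ - ‖S v‖)])
      _ = Real.sqrt 2 * ‖v‖ := by
          rw [Real.sqrt_mul (by norm_num), Real.sqrt_sq (norm_nonneg v)]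
  set Lx := ∫ t in (0:ℝ)..1, ‖x' t‖ with hLx
  set Ly := ∫ t in (0:ℝ)..1, ‖y' t‖ with hLy
  set L := ∫ t in (0:ℝ)..1, ‖γ' t‖ with hL
  have hicc : Set.uIcc (0:ℝ) 1 = Set.Icc 0 1 := Set.uIcc_of_le zero_le_one
  have intx' : IntervalIntegrable (fun t => ‖x' t‖) volume 0 1 := by
    apply ContinuousOn.intervalIntegrable; rw [hicc]; exact hx'c.norm
  have inty' : IntervalIntegrable (fun t => ‖y' t‖) volume 0 1 := by
    apply ContinuousOn.intervalIntegrable; rw [hicc]; exact hy'c.norm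
  have intγ' : IntervalIntegrable (fun t => ‖γ' t‖) volume 0 1 := by
    apply ContinuousOn.intervalIntegrable; rw [hicc]; exact hcont.norm
  have hLx0 : 0 ≤ Lx := intervalIntegral.integral_nonneg zero_le_one (fun t _ => norm_nonneg _)
  have hLy0 : 0 ≤ Ly := intervalIntegral.integral_nonneg zero_le_one (fun t _ => norm_nonneg _)
  -- sum of lengths bound
  have hsum : Lx + Ly ≤ Real.sqrt 2 * L := by
    have := intervalIntegral.integral_mono_on zero_le_one (intx'.add inty')
      (intγ'.const_mul (Real.sqrt 2)) (fun t ht => hFle (γ' t))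
    calc Lx + Ly = ∫ t in (0:ℝ)..1, (‖x' t‖ + ‖y' t‖) :=
          (intervalIntegral.integral_add intx' inty').symm
      _ ≤ ∫ t in (0:ℝ)..1, Real.sqrt 2 * ‖γ' t‖ := this
      _ = Real.sqrt 2 * L := intervalIntegral.integral_const_mul _ _
  -- pointwise bound on ‖x t - x 0‖
  have hxbound : ∀ t ∈ Set.Icc (0:ℝ) 1, ‖x t - x 0‖ ≤ Lx := by
    intro t ht
    have hftc : ∫ s in (0:ℝ)..t, x' s = x t - x 0 := ftc_aux x x' hxd hx'c ht
    calc ‖x t - x 0‖ = ‖∫ s in (0:ℝ)..t, x' s‖ := by rw [hftc]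
      _ ≤ ∫ s in (0:ℝ)..t, ‖x' s‖ := intervalIntegral.norm_integral_le_integral_norm ht.1
      _ ≤ Lx := intervalIntegral.integral_mono_interval le_rfl ht.1 ht.2
          (Filter.Eventually.of_forall fun s => norm_nonneg _) intx'
  -- ∫ ⟪x 0, y'⟫ = 0
  have hconst : (∫ t in (0:ℝ)..1, (inner ℝ (x 0) (y' t) : ℝ)) = 0 := by
    have hd : ∀ t ∈ Set.Icc (0:ℝ) 1,
        HasDerivWithinAt (fun t => (inner ℝ (x 0) (y t) : ℝ))
          (inner ℝ (x 0) (y' t)) (Set.Icc 0 1) t := by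
      intro t ht
      have := (hasDerivWithinAt_const t (Set.Icc (0:ℝ) 1) (x 0)).inner ℝ (hyd t ht)
      simpa using this
    have hc : ContinuousOn (fun t => (inner ℝ (x 0) (y' t) : ℝ)) (Set.Icc 0 1) :=
      (continuousOn_const : ContinuousOn (fun _ => x 0) _).inner hy'c
    have := ftc_aux _ _ hd hc (Set.right_mem_Icc.2 zero_le_one)
    have hy01 : y 0 = y 1 := by rw [hy]; simp [hclosed]
    rw [this, hy01, sub_self]
  -- integrability of inner products
  have intinner : IntervalIntegrable (fun t => (inner ℝ (x t - x 0) (y' t) : ℝ)) volume 0 1 := by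
    apply ContinuousOn.intervalIntegrable; rw [hicc]
    exact (hxc.sub continuousOn_const).inner hy'c
  have intinner0 : IntervalIntegrable (fun t => (inner ℝ (x 0) (y' t) : ℝ)) volume 0 1 := by
    apply ContinuousOn.intervalIntegrable; rw [hicc]
    exact (continuousOn_const : ContinuousOn (fun _ => x 0) _).inner hy'c
  -- main bound
  have hsplit : (∫ t in (0:ℝ)..1, (inner ℝ (x t) (y' t) : ℝ))
      = ∫ t in (0:ℝ)..1, (inner ℝ (x t - x 0) (y' t) : ℝ) := by
    have heq : (fun t => (inner ℝ (x t) (y' t) : ℝ))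
        = fun t => (inner ℝ (x t - x 0) (y' t) : ℝ) + inner ℝ (x 0) (y' t) := by
      funext t; simp [inner_sub_left]
    rw [heq, intervalIntegral.integral_add intinner intinner0, hconst, add_zero]
  have hmain : |∫ t in (0:ℝ)..1, (inner ℝ (x t) (y' t) : ℝ)| ≤ Lx * Ly := by
    rw [hsplit]
    calc |∫ t in (0:ℝ)..1, (inner ℝ (x t - x 0) (y' t) : ℝ)|
        ≤ ∫ t in (0:ℝ)..1, |(inner ℝ (x t - x 0) (y' t) : ℝ)| :=
          intervalIntegral.abs_integral_le_integral_abs zero_le_one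
      _ ≤ ∫ t in (0:ℝ)..1, Lx * ‖y' t‖ := by
          apply intervalIntegral.integral_mono_on zero_le_one intinner.abs
            (inty'.const_mul Lx)
          intro t ht
          calc |(inner ℝ (x t - x 0) (y' t) : ℝ)| ≤ ‖x t - x 0‖ * ‖y' t‖ :=
                abs_real_inner_le_norm _ _
            _ ≤ Lx * ‖y' t‖ :=
                mul_le_mul_of_nonneg_right (hxbound t ht) (norm_nonneg _)
      _ = Lx * Ly := intervalIntegral.integral_const_mul _ _
  -- conclude
  have hfinal : Lx * Ly ≤ (1/2) * L ^ 2 := by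
    have hs2 : Real.sqrt 2 ^ 2 = 2 := Real.sq_sqrt (by norm_num)
    have h0 : (0:ℝ) ≤ Lx + Ly := by linarith
    nlinarith [sq_nonneg (Lx - Ly), mul_le_mul hsum hsum h0 (le_trans h0 hsum),
      sq_nonneg (Lx + Ly)]
  calc |∫ t in (0:ℝ)..1,
        (inner ℝ ((WithLp.equiv 2 _ (γ t)).1) ((WithLp.equiv 2 _ (γ' t)).2) : ℝ)|
      = |∫ t in (0:ℝ)..1, (inner ℝ (x t) (y' t) : ℝ)| := by
        congr 1
      _ ≤ Lx * Ly := hmain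
      _ ≤ (1/2) * L ^ 2 := hfinal
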